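/- For every E ∈ ℝ with E ≠ 0, the limit lim_{ε→0⁺} ∫_ℝ e^{−i E s}/(s − i ε)² ds exists and equals 2πE when E < 0 and equals 0 when E > 0. Consequently lim_{ε→0⁺} ∫_ℝ e^{−i E s}·(−1/(4π²(s − i ε)²)) ds = −(E/(2π))·Θ(−E), where Θ is the Heaviside function. -/

import Mathlib

open MeasureTheory Real Filter Set
open scoped FourierTransform Topology

lemma aux_int_real {c : ℝ} (hc : 0 < c) :
    IntegrableOn (fun t : ℝ => t * Real.exp (-(c * t))) (Ioi 0) := by
  have h : IntegrableOn (fun x : ℝ => Real.exp (-x) * x) (Ioi 0) := by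
    have h := Real.GammaIntegral_convergent (s := 2) (by norm_num)
    refine h.congr_fun (fun x hx => ?_) measurableSet_Ioi
    norm_num
  have h2 : IntegrableOn (fun x : ℝ => Real.exp (-(c * x)) * (c * x)) (Ioi 0) := by
    have := (integrableOn_Ioi_comp_mul_left_iff (fun x => Real.exp (-x) * x) 0 hc).2
    simpa using this (by simpa using h)
  refine IntegrableOn.congr_fun (h2.const_mul c⁻¹) (fun x hx => ?_) measurableSet_Ioi
  field_simp

lemma aux_int {a : ℂ} (ha : 0 < a.re) :
    IntegrableOn (fun t : ℝ => (t : ℂ) * Complex.exp (-(a * t))) (Ioi 0) := by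
  refine Integrable.mono' (aux_int_real ha) ?_ ?_
  · refine (Continuous.aestronglyMeasurable (by continuity)).restrict
  · filter_upwards [ae_restrict_mem measurableSet_Ioi] with t ht
    have : ‖(t : ℂ) * Complex.exp (-(a * t))‖ = |t| * Real.exp (-(a.re * t)) := by
      rw [norm_mul, Complex.norm_exp]
      simp
    rw [this, abs_of_pos ht]

lemma aux_eval {a : ℂ} (ha : 0 < a.re) :
    ∫ t in Ioi (0:ℝ), (t : ℂ) * Complex.exp (-(a * t)) = 1 / a ^ 2 := by
  have ha0 : a ≠ 0 := fun h => by simp [h] at ha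
  set F : ℝ → ℂ := fun t => -((t : ℂ) / a + 1 / a ^ 2) * Complex.exp (-(a * t)) with hF
  have hderiv : ∀ t : ℝ, HasDerivAt F ((t : ℂ) * Complex.exp (-(a * t))) t := by
    intro t
    have hG : HasDerivAt (fun z : ℂ => -(z / a + 1 / a ^ 2) * Complex.exp (-(a * z)))
        ((t : ℂ) * Complex.exp (-(a * t))) (t : ℂ) := by
      have h1 : HasDerivAt (fun z : ℂ => -(z / a + 1 / a ^ 2)) (-(1 / a)) (t : ℂ) := by
        exact (((hasDerivAt_id (t : ℂ)).div_const a).add_const (1 / a ^ 2)).neg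
      have h2 : HasDerivAt (fun z : ℂ => Complex.exp (-(a * z)))
          (-a * Complex.exp (-(a * t))) (t : ℂ) := by
        have := (((hasDerivAt_id (t : ℂ)).const_mul a).neg).cexp
        simpa [mul_comm] using this
      have := h1.mul h2
      refine this.congr_deriv ?_
      field_simp
      ring
    exact hG.comp_ofReal
  have hlim : Tendsto F atTop (𝓝 0) := by
    have key : Tendsto (fun t : ℝ => (t * ‖(1:ℂ) / a‖ + ‖(1:ℂ) / a ^ 2‖) *
        Real.exp (-(a.re * t))) atTop (𝓝 0) := by
      have h1 : Tendsto (fun t : ℝ => (a.re * t) * Real.exp (-(a.re * t))) atTop (𝓝 0) := by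
        have := (Real.tendsto_pow_mul_exp_neg_atTop_nhds_zero 1).comp
          (tendsto_id.const_mul_atTop ha)
        simpa [Function.comp_def] using this
      have h1' : Tendsto (fun t : ℝ => t * Real.exp (-(a.re * t))) atTop (𝓝 0) := by
        have := h1.const_mul (a.re)⁻¹
        simp only [mul_zero] at this
        refine this.congr (fun t => ?_)
        field_simp
      have h2 : Tendsto (fun t : ℝ => Real.exp (-(a.re * t))) atTop (𝓝 0) :=
        Real.tendsto_exp_neg_atTop_nhds_zero.comp (tendsto_id.const_mul_atTop ha)
      have := (h1'.const_mul ‖(1:ℂ) / a‖).add (h2.const_mul ‖(1:ℂ) / a ^ 2‖)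
      simp only [mul_zero, add_zero] at this
      refine this.congr (fun t => ?_)
      ring
    refine squeeze_zero_norm' ?_ key
    filter_upwards [Ioi_mem_atTop (0:ℝ)] with t (ht : 0 < t)
    have : ‖F t‖ = ‖(t : ℂ) / a + 1 / a ^ 2‖ * Real.exp (-(a.re * t)) := by
      rw [hF]
      simp only [norm_mul, norm_neg, Complex.norm_exp]
      congr 2
      simp
    rw [this]
    gcongr
    refine (norm_add_le _ _).trans ?_
    gcongr
    rw [div_eq_mul_inv, norm_mul, Complex.norm_real, Real.norm_eq_abs, abs_of_pos ht, one_div]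
  have := integral_Ioi_of_hasDerivAt_of_tendsto' (f := F)
    (fun x _ => hderiv x) (aux_int ha) hlim
  rw [this, hF]
  simp

lemma key_fourier {E : ℝ} (hE : E ≠ 0) {ε : ℝ} (hε : 0 < ε) :
    ∫ s : ℝ, Complex.exp (-(Complex.I * E * s)) / ((s : ℂ) - Complex.I * ε) ^ 2
      = if E < 0 then ((2 * π * E : ℝ) : ℂ) * Complex.exp ((ε * E : ℝ) : ℂ) else 0 := by
  set g : ℝ → ℂ :=
    (Ioi (0:ℝ)).indicator (fun t : ℝ => -((t : ℂ) * Complex.exp (-((ε : ℂ) * t)))) with hg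
  have hre : (0:ℝ) < ((ε : ℂ)).re := by simpa using hε
  have hgi : Integrable g := by
    rw [hg, integrable_indicator_iff measurableSet_Ioi]
    exact (aux_int hre).neg
  have hzne : ∀ w : ℝ, ((2 * π * w : ℝ) : ℂ) - Complex.I * ε ≠ 0 := by
    intro w h
    have := congrArg Complex.im h
    simp at this
    linarith
  have hFg : ∀ w : ℝ, 𝓕 g w = 1 / (((2 * π * w : ℝ) : ℂ) - Complex.I * ε) ^ 2 := by
    intro w
    rw [Real.fourier_real_eq_integral_exp_smul]
    have heq : ∀ v : ℝ, Complex.exp (↑(-2 * π * v * w) * Complex.I) • g v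
        = (Ioi (0:ℝ)).indicator
          (fun v : ℝ => -((v : ℂ) * Complex.exp (-((((ε : ℂ) + 2 * π * w * Complex.I)) * v)))) v := by
      intro v
      by_cases hv : v ∈ Ioi (0:ℝ)
      · rw [hg]
        simp only [indicator_of_mem hv, smul_eq_mul]
        rw [mul_neg, mul_left_comm, ← Complex.exp_add]
        congr 3
        push_cast
        ring
      · rw [hg]
        simp [indicator_of_notMem hv]
    rw [integral_congr_ae (Eventually.of_forall heq), integral_indicator measurableSet_Ioi]
    have ha : (0:ℝ) < ((ε : ℂ) + 2 * π * w * Complex.I).re := by simpa using hε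
    rw [integral_neg, aux_eval ha]
    have hz : ((ε : ℂ) + 2 * π * w * Complex.I)
        = Complex.I * ((((2 * π * w : ℝ)) : ℂ) - Complex.I * ε) := by
      push_cast
      ring_nf
      rw [Complex.I_sq]
      ring
    rw [hz, mul_pow, Complex.I_sq]
    push_cast
    rw [neg_one_mul, div_neg, neg_neg, one_div]
  have hFgi : Integrable (𝓕 g) := by
    rw [show 𝓕 g = fun w : ℝ => 1 / (((2 * π * w : ℝ) : ℂ) - Complex.I * ε) ^ 2 from
      funext hFg]
    have hb : Integrable (fun x : ℝ => ((2 * π * x) ^ 2 + ε ^ 2)⁻¹) := by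
      have h0 : (fun x : ℝ => ((2 * π * x) ^ 2 + ε ^ 2)⁻¹)
          = fun x : ℝ => ε⁻¹ ^ 2 * (1 + ((2 * π / ε) * x) ^ 2)⁻¹ := by
        funext x
        have hεne : ε ≠ 0 := hε.ne'
        field_simp
        ring
      rw [h0]
      exact (integrable_inv_one_add_sq.comp_mul_left' (by positivity : (2*π/ε) ≠ 0)).const_mul _
    refine hb.mono' ?_ ?_
    · refine Continuous.aestronglyMeasurable ?_
      refine continuous_const.div (by continuity) (fun w => pow_ne_zero _ (hzne w))
    · refine Eventually.of_forall (fun w => ?_)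
      have : ‖(((2 * π * w : ℝ)) : ℂ) - Complex.I * ε‖ ^ 2 = (2 * π * w) ^ 2 + ε ^ 2 := by
        rw [Complex.sq_norm, Complex.normSq_apply]
        simp
        ring
      rw [norm_div, norm_one, norm_pow, this, one_div]
  have hcont : ContinuousAt g (-E) := by
    rcases lt_or_gt_of_ne hE with h | h
    · have hmem : Ioi (0:ℝ) ∈ 𝓝 (-E) := isOpen_Ioi.mem_nhds (by simpa using h)
      have hc : ContinuousAt (fun t : ℝ => -((t : ℂ) * Complex.exp (-((ε : ℂ) * t)))) (-E) :=
        Continuous.continuousAt (by continuity)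
      have hev : (fun t : ℝ => -((t : ℂ) * Complex.exp (-((ε : ℂ) * t)))) =ᶠ[𝓝 (-E)] g := by
        rw [hg]
        exact eventually_of_mem hmem (fun y hy => by rw [indicator_of_mem hy])
      exact hc.congr hev
    · have hmem : Iio (0:ℝ) ∈ 𝓝 (-E) := isOpen_Iio.mem_nhds (by simpa using h)
      have hc : ContinuousAt (fun _ : ℝ => (0:ℂ)) (-E) := continuousAt_const
      have hev : (fun _ : ℝ => (0:ℂ)) =ᶠ[𝓝 (-E)] g := by
        refine eventually_of_mem hmem (fun y hy => ?_)
        rw [hg]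
        exact (indicator_of_notMem (fun hy' : y ∈ Ioi (0:ℝ) =>
          absurd (mem_Ioi.1 hy') (not_lt.2 (le_of_lt (mem_Iio.1 hy)))) _).symm
      exact hc.congr hev
  have hinv : 𝓕 (𝓕 g) E = g (-E) := by
    have := hgi.fourierInv_fourier_eq hFgi hcont
    rw [Real.fourierInv_eq_fourier_neg] at this
    simpa using this
  have h2π : (0:ℝ) < 2 * π := by positivity
  have hcomp := MeasureTheory.Measure.integral_comp_mul_left
    (fun s : ℝ => Complex.exp (-(Complex.I * E * s)) / ((s : ℂ) - Complex.I * ε) ^ 2) (2 * π)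
  have hFF : (∫ x : ℝ, Complex.exp (-(Complex.I * E * (2 * π * x : ℝ))) /
      (((2 * π * x : ℝ) : ℂ) - Complex.I * ε) ^ 2) = 𝓕 (𝓕 g) E := by
    rw [Real.fourier_real_eq_integral_exp_smul]
    refine integral_congr_ae (Eventually.of_forall (fun v => ?_))
    simp only [hFg, smul_eq_mul, mul_one_div]
    rw [div_eq_div_iff (pow_ne_zero _ (hzne v)) (pow_ne_zero _ (hzne v))]
    congr 2
    push_cast
    ring
  rw [show |(2*π)⁻¹| = (2*π)⁻¹ from abs_of_pos (by positivity)] at hcomp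
  have h2 : (∫ s : ℝ, Complex.exp (-(Complex.I * E * s)) / ((s : ℂ) - Complex.I * ε) ^ 2)
      = (2*π : ℝ) • (𝓕 (𝓕 g) E) := by
    rw [← hFF, hcomp, smul_smul, mul_inv_cancel₀ h2π.ne', one_smul]
  rw [h2, hinv]
  rcases lt_or_gt_of_ne hE with h | h
  · rw [if_pos h, hg, indicator_of_mem (by simpa using h : -E ∈ Ioi (0:ℝ))]
    rw [Complex.real_smul]
    push_cast
    ring_nf
  · rw [if_neg (by linarith), hg,
      indicator_of_notMem (fun hy' : -E ∈ Ioi (0:ℝ) => absurd (mem_Ioi.1 hy') (by linarith)),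
      smul_zero]

theorem stmt5 (E : ℝ) (hE : E ≠ 0) :
    Tendsto (fun ε : ℝ =>
        ∫ s : ℝ, Complex.exp (-(Complex.I * E * s)) / ((s : ℂ) - Complex.I * ε) ^ 2)
      (nhdsWithin 0 (Set.Ioi 0))
      (nhds (if E < 0 then ((2 * π * E : ℝ) : ℂ) else 0)) ∧
    Tendsto (fun ε : ℝ =>
        ∫ s : ℝ, Complex.exp (-(Complex.I * E * s)) *
          (-1 / (4 * (π : ℂ) ^ 2 * ((s : ℂ) - Complex.I * ε) ^ 2)))
      (nhdsWithin 0 (Set.Ioi 0))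
      (nhds ((-(E / (2 * π)) * (if E < 0 then 1 else 0) : ℝ) : ℂ)) := by
  have hTend1 : Tendsto (fun ε : ℝ =>
      ∫ s : ℝ, Complex.exp (-(Complex.I * E * s)) / ((s : ℂ) - Complex.I * ε) ^ 2)
      (nhdsWithin 0 (Set.Ioi 0))
      (nhds (if E < 0 then ((2 * π * E : ℝ) : ℂ) else 0)) := by
    have hcongr : (fun ε : ℝ => if E < 0 then ((2 * π * E : ℝ) : ℂ) *
          Complex.exp ((ε * E : ℝ) : ℂ) else 0) =ᶠ[nhdsWithin (0:ℝ) (Set.Ioi 0)]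
        (fun ε : ℝ =>
          ∫ s : ℝ, Complex.exp (-(Complex.I * E * s)) / ((s : ℂ) - Complex.I * ε) ^ 2) := by
      filter_upwards [self_mem_nhdsWithin] with ε (hε : ε ∈ Ioi (0:ℝ))
      exact (key_fourier hE hε).symm
    refine Tendsto.congr' hcongr ?_
    by_cases h : E < 0
    · simp only [if_pos h]
      have hc : Tendsto (fun ε : ℝ => ((2 * π * E : ℝ) : ℂ) * Complex.exp ((ε * E : ℝ) : ℂ))
          (𝓝 0) (𝓝 (((2 * π * E : ℝ) : ℂ) * Complex.exp (((0:ℝ) * E : ℝ) : ℂ))) := by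
        refine Continuous.tendsto ?_ 0
        exact continuous_const.mul (Complex.continuous_exp.comp (by continuity))
      simpa using hc.mono_left nhdsWithin_le_nhds
    · simp only [if_neg h]
      exact tendsto_const_nhds
  refine ⟨hTend1, ?_⟩
  have hrw : (fun ε : ℝ => ∫ s : ℝ, Complex.exp (-(Complex.I * E * s)) *
        (-1 / (4 * (π : ℂ) ^ 2 * ((s : ℂ) - Complex.I * ε) ^ 2)))
      = (fun ε : ℝ => (-1 / (4 * (π : ℂ) ^ 2)) *
        ∫ s : ℝ, Complex.exp (-(Complex.I * E * s)) / ((s : ℂ) - Complex.I * ε) ^ 2) := by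
    funext ε
    rw [← integral_const_mul]
    refine integral_congr_ae (Eventually.of_forall fun s => ?_)
    simp only [div_eq_mul_inv, mul_inv]
    ring
  rw [hrw]
  have h2 := hTend1.const_mul ((-1 : ℂ) / (4 * (π : ℂ) ^ 2))
  have hval : ((-(E / (2 * π)) * (if E < 0 then (1:ℝ) else 0) : ℝ) : ℂ)
      = ((-1 : ℂ) / (4 * (π : ℂ) ^ 2)) * (if E < 0 then ((2 * π * E : ℝ) : ℂ) else 0) := by
    by_cases h : E < 0
    · simp only [if_pos h]
      have hπ : (π : ℂ) ≠ 0 := Complex.ofReal_ne_zero.2 Real.pi_ne_zero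
      push_cast
      field_simp
      ring
    · simp [if_neg h]
  rw [hval]
  exact h2
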